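/- Let ā : ℝ → (0,∞) be continuous and let b̄ : ℝ → ℝ be continuous, nonincreasing, and have at most one zero; let x₀ be the zero of b̄ if one exists, x₀ := −∞ if b̄ < 0 everywhere, and x₀ := +∞ if b̄ > 0 everywhere. Then: (i) for every x < x₀, e^{−∫₀ˣ 2b̄/ā}·∫_{−∞}^x (2/ā(y))·e^{∫₀ʸ 2b̄/ā} dy ≤ 1/b̄(x); (ii) for every x > x₀, e^{−∫₀ˣ 2b̄/ā}·∫_x^∞ (2/ā(y))·e^{∫₀ʸ 2b̄/ā} dy ≤ 1/|b̄(x)|; and (iii) if x₀ is finite, then for every c₁ < x₀ and every x < x₀, e^{−∫₀ˣ 2b̄/ā}·∫_{−∞}^x (2/ā(y))·e^{∫₀ʸ 2b̄/ā} dy ≤ 1/b̄(c₁) + 2|c₁ − x₀|·sup_{y∈[c₁,x₀]} 1/ā(y), and for every c₂ > x₀ and every x > x₀, e^{−∫_{x₀}^x 2b̄/ā}·∫_x^∞ (2/ā(y))·e^{∫_{x₀}^y 2b̄/ā} dy ≤ 1/|b̄(c₂)| + 2|c₂ − x₀|·sup_{y∈[x₀,c₂]} 1/ā(y). -/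

import Mathlib

open MeasureTheory Set Filter

lemma helperIic (g : ℝ → ℝ) (x C : ℝ) (hg : Continuous g) (hg0 : ∀ y, 0 ≤ g y)
    (hbd : ∀ a : ℝ, a ≤ x → (∫ y in a..x, g y) ≤ C) :
    IntegrableOn g (Set.Iic x) ∧ (∫ y in Set.Iic x, g y) ≤ C := by
  have hten : Tendsto (fun n : ℕ => x - n) atTop atBot := by
    apply tendsto_atBot_add_const_left
    exact tendsto_neg_atBot_iff.mpr tendsto_natCast_atTop_atTop
  have hint : IntegrableOn g (Set.Iic x) := by
    refine integrableOn_Iic_of_intervalIntegral_norm_bounded C x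
      (fun n : ℕ => (hg.integrableOn_Ioc)) hten ?_
    filter_upwards with n
    calc (∫ y in (x - (n:ℝ))..x, ‖g y‖) = ∫ y in (x - (n:ℝ))..x, g y := by
          congr 1; ext y; exact Real.norm_of_nonneg (hg0 y)
      _ ≤ C := hbd _ (by simp [Nat.cast_nonneg])
  refine ⟨hint, ?_⟩
  have := intervalIntegral_tendsto_integral_Iic x hint hten
  exact le_of_tendsto this (by filter_upwards with n using hbd _ (by simp [Nat.cast_nonneg]))

lemma helperIci (g : ℝ → ℝ) (x C : ℝ) (hg : Continuous g) (hg0 : ∀ y, 0 ≤ g y)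
    (hbd : ∀ b : ℝ, x ≤ b → (∫ y in x..b, g y) ≤ C) :
    IntegrableOn g (Set.Ici x) ∧ (∫ y in Set.Ici x, g y) ≤ C := by
  have hten : Tendsto (fun n : ℕ => x + n) atTop atTop := by
    apply tendsto_atTop_add_const_left
    exact tendsto_natCast_atTop_atTop
  have hint : IntegrableOn g (Set.Ioi x) := by
    refine integrableOn_Ioi_of_intervalIntegral_norm_bounded C x
      (fun n : ℕ => (hg.integrableOn_Ioc)) hten ?_
    filter_upwards with n
    calc (∫ y in x..(x + (n:ℝ)), ‖g y‖) = ∫ y in x..(x + (n:ℝ)), g y := by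
          congr 1; ext y; exact Real.norm_of_nonneg (hg0 y)
      _ ≤ C := hbd _ (by simp [Nat.cast_nonneg])
  have hint' : IntegrableOn g (Set.Ici x) := Iff.mpr integrableOn_Ici_iff_integrableOn_Ioi hint
  refine ⟨hint', ?_⟩
  rw [integral_Ici_eq_integral_Ioi]
  have := intervalIntegral_tendsto_integral_Ioi x hint hten
  exact le_of_tendsto this (by filter_upwards with n using hbd _ (by simp [Nat.cast_nonneg]))

theorem drift_integral_bounds
    (abar bbar : ℝ → ℝ)
    (ha_cont : Continuous abar) (ha_pos : ∀ x, 0 < abar x)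
    (hb_cont : Continuous bbar) (hb_anti : Antitone bbar)
    (hb_zero : ∀ x y : ℝ, bbar x = 0 → bbar y = 0 → x = y)
    (p : ℝ → ℝ)
    (hp : ∀ x : ℝ, p x = Real.exp (∫ u in (0:ℝ)..x, 2 * bbar u / abar u)) :
    (∀ x : ℝ, 0 < bbar x →
      IntegrableOn (fun y => 2 / abar y * p y) (Set.Iic x) ∧
      (p x)⁻¹ * (∫ y in Set.Iic x, 2 / abar y * p y) ≤ 1 / bbar x) ∧
    (∀ x : ℝ, bbar x < 0 →
      IntegrableOn (fun y => 2 / abar y * p y) (Set.Ici x) ∧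
      (p x)⁻¹ * (∫ y in Set.Ici x, 2 / abar y * p y) ≤ 1 / |bbar x|) ∧
    (∀ x₀ : ℝ, bbar x₀ = 0 →
      (∀ c₁ : ℝ, c₁ < x₀ → ∀ x : ℝ, x < x₀ →
        IntegrableOn (fun y => 2 / abar y * p y) (Set.Iic x) ∧
        (p x)⁻¹ * (∫ y in Set.Iic x, 2 / abar y * p y)
          ≤ 1 / bbar c₁
            + 2 * |c₁ - x₀| * sSup ((fun y => 1 / abar y) '' Set.Icc c₁ x₀)) ∧
      (∀ c₂ : ℝ, x₀ < c₂ → ∀ x : ℝ, x₀ < x →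
        IntegrableOn (fun y => 2 / abar y * (p y / p x₀)) (Set.Ici x) ∧
        (p x₀ / p x) * (∫ y in Set.Ici x, 2 / abar y * (p y / p x₀))
          ≤ 1 / |bbar c₂|
            + 2 * |c₂ - x₀| * sSup ((fun y => 1 / abar y) '' Set.Icc x₀ c₂))) := by
  have hane : ∀ x, abar x ≠ 0 := fun x => (ha_pos x).ne'
  set f : ℝ → ℝ := fun u => 2 * bbar u / abar u with hf_def
  have hf_cont : Continuous f := (continuous_const.mul hb_cont).div ha_cont hane
  have hinv_cont : Continuous fun y => 1 / abar y := continuous_const.div ha_cont hane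
  have cancel1 : ∀ a b : ℝ, a ≠ 0 → a⁻¹ * (a / b) = 1 / b := by
    intro a b ha
    rw [div_eq_mul_inv, ← mul_assoc, inv_mul_cancel₀ ha, one_mul, one_div]
  have hp_pos : ∀ x, 0 < p x := fun x => (hp x) ▸ Real.exp_pos _
  have hp' : ∀ x, HasDerivAt p (f x * p x) x := by
    intro x
    have h1 : HasDerivAt (fun t => ∫ u in (0:ℝ)..t, f u) (f x) x :=
      (hf_cont.integral_hasStrictDerivAt 0 x).hasDerivAt
    have h2 := h1.exp
    have he : (fun t => Real.exp (∫ u in (0:ℝ)..t, f u)) = p := by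
      funext t; rw [hp t]
    rw [he] at h2
    have : Real.exp (∫ u in (0:ℝ)..x, f u) = p x := (hp x).symm
    rw [this, mul_comm] at h2
    exact h2
  have hp_cont : Continuous p := continuous_iff_continuousAt.mpr fun x => (hp' x).continuousAt
  set g : ℝ → ℝ := fun y => 2 / abar y * p y with hg_def
  have hg_cont : Continuous g := (continuous_const.div ha_cont hane).mul hp_cont
  have hg0 : ∀ y, 0 ≤ g y := fun y => by
    have := (ha_pos y); have := (hp_pos y); positivity
  have hfp_cont : Continuous fun y => f y * p y := hf_cont.mul hp_cont
  have key : ∀ a b : ℝ, (∫ y in a..b, f y * p y) = p b - p a := fun a b =>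
    intervalIntegral.integral_eq_sub_of_hasDerivAt (fun y _ => hp' y)
      (hfp_cont.intervalIntegrable a b)
  -- Part 1 (with explicit bound on the raw integral)
  have part1 : ∀ x : ℝ, 0 < bbar x →
      IntegrableOn g (Set.Iic x) ∧ (∫ y in Set.Iic x, g y) ≤ p x / bbar x := by
    intro x hbx
    apply helperIic g x (p x / bbar x) hg_cont hg0
    intro a ha
    have hmono : (∫ y in a..x, g y) ≤ ∫ y in a..x, (f y * p y) / bbar x := by
      apply intervalIntegral.integral_mono_on ha (hg_cont.intervalIntegrable a x)
        ((hfp_cont.div_const _).intervalIntegrable a x)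
      intro y hy
      rw [le_div_iff₀ hbx]
      have h1 : g y * bbar x ≤ g y * bbar y :=
        mul_le_mul_of_nonneg_left (hb_anti hy.2) (hg0 y)
      refine h1.trans_eq ?_
      show 2 / abar y * p y * bbar y = 2 * bbar y / abar y * p y
      ring
    rw [intervalIntegral.integral_div, key a x] at hmono
    refine hmono.trans ?_
    have := (hp_pos a).le
    gcongr
    linarith
  -- Part 2
  have part2 : ∀ x : ℝ, bbar x < 0 →
      IntegrableOn g (Set.Ici x) ∧ (∫ y in Set.Ici x, g y) ≤ p x / |bbar x| := by
    intro x hbx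
    have habs : |bbar x| = -bbar x := abs_of_neg hbx
    have habs_pos : 0 < |bbar x| := abs_pos.mpr hbx.ne
    apply helperIci g x (p x / |bbar x|) hg_cont hg0
    intro b hb
    have hmono : (∫ y in x..b, g y) ≤ ∫ y in x..b, (-(f y * p y)) / |bbar x| := by
      apply intervalIntegral.integral_mono_on hb (hg_cont.intervalIntegrable x b)
        ((hfp_cont.neg.div_const _).intervalIntegrable x b)
      intro y hy
      rw [le_div_iff₀ habs_pos, habs]
      have hby : bbar y ≤ bbar x := hb_anti hy.1
      have h1 : g y * -bbar x ≤ g y * -bbar y := by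
        apply mul_le_mul_of_nonneg_left _ (hg0 y); linarith
      refine h1.trans_eq ?_
      show 2 / abar y * p y * -bbar y = -(2 * bbar y / abar y * p y)
      ring
    rw [intervalIntegral.integral_div, intervalIntegral.integral_neg, key x b] at hmono
    refine hmono.trans ?_
    have := (hp_pos b).le
    gcongr
    linarith
  have main1 : ∀ x : ℝ, 0 < bbar x →
      IntegrableOn g (Set.Iic x) ∧
      (p x)⁻¹ * (∫ y in Set.Iic x, g y) ≤ 1 / bbar x := by
    intro x hbx
    obtain ⟨hi, hb⟩ := part1 x hbx
    refine ⟨hi, ?_⟩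
    have h1 : (p x)⁻¹ * (∫ y in Set.Iic x, g y) ≤ (p x)⁻¹ * (p x / bbar x) :=
      mul_le_mul_of_nonneg_left hb (inv_nonneg.mpr (hp_pos x).le)
    exact h1.trans_eq (cancel1 _ _ (hp_pos x).ne')
  have main2 : ∀ x : ℝ, bbar x < 0 →
      IntegrableOn g (Set.Ici x) ∧
      (p x)⁻¹ * (∫ y in Set.Ici x, g y) ≤ 1 / |bbar x| := by
    intro x hbx
    obtain ⟨hi, hb⟩ := part2 x hbx
    refine ⟨hi, ?_⟩
    have h1 : (p x)⁻¹ * (∫ y in Set.Ici x, g y) ≤ (p x)⁻¹ * (p x / |bbar x|) :=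
      mul_le_mul_of_nonneg_left hb (inv_nonneg.mpr (hp_pos x).le)
    exact h1.trans_eq (cancel1 _ _ (hp_pos x).ne')
  refine ⟨main1, main2, ?_⟩
  intro x₀ hx₀
  have hbpos : ∀ z : ℝ, z < x₀ → 0 < bbar z := by
    intro z hz
    have h0 := hb_anti hz.le
    rw [hx₀] at h0
    rcases lt_or_eq_of_le h0 with h | h
    · exact h
    · exact absurd (hb_zero z x₀ h.symm hx₀) hz.ne
  have hbneg : ∀ z : ℝ, x₀ < z → bbar z < 0 := by
    intro z hz
    have h0 := hb_anti hz.le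
    rw [hx₀] at h0
    rcases lt_or_eq_of_le h0 with h | h
    · exact h
    · exact absurd (hb_zero z x₀ h hx₀) hz.ne'
  -- monotonicity of p below x₀, antitonicity above x₀
  have hmono : ∀ a b : ℝ, a ≤ b → b ≤ x₀ → p a ≤ p b := by
    intro a b hab hbx₀
    have h0 : (0:ℝ) ≤ ∫ y in a..b, f y * p y := by
      apply intervalIntegral.integral_nonneg hab
      intro y hy
      have hb0 : 0 ≤ bbar y := by
        have h0 := hb_anti (hy.2.trans hbx₀); rw [hx₀] at h0; exact h0
      have := (ha_pos y); have := (hp_pos y).le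
      positivity
    rw [key a b] at h0; linarith
  have hanti : ∀ a b : ℝ, x₀ ≤ a → a ≤ b → p b ≤ p a := by
    intro a b hx₀a hab
    have h0 : (0:ℝ) ≤ ∫ y in a..b, -(f y * p y) := by
      apply intervalIntegral.integral_nonneg hab
      intro y hy
      have hb0 : bbar y ≤ 0 := by
        have h0 := hb_anti (hx₀a.trans hy.1); rw [hx₀] at h0; exact h0
      have h1 : -(f y * p y) = 2 * -bbar y * (p y / abar y) := by
        show -(2 * bbar y / abar y * p y) = _; ring
      rw [h1]
      apply mul_nonneg (by linarith)
      exact div_nonneg (hp_pos y).le (ha_pos y).le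
    rw [intervalIntegral.integral_neg, key a b] at h0; linarith
  constructor
  · -- (iii) left part
    intro c₁ hc₁ x hx
    have hbx := hbpos x hx
    have hbc₁ := hbpos c₁ hc₁
    set S := sSup ((fun y => 1 / abar y) '' Set.Icc c₁ x₀) with hS_def
    have hS_bdd : BddAbove ((fun y => 1 / abar y) '' Set.Icc c₁ x₀) :=
      (isCompact_Icc.image hinv_cont).bddAbove
    have hS_le : ∀ y ∈ Set.Icc c₁ x₀, 1 / abar y ≤ S := fun y hy =>
      le_csSup hS_bdd ⟨y, hy, rfl⟩
    have hS0 : 0 ≤ S := le_trans (by have := ha_pos c₁; positivity)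
      (hS_le c₁ ⟨le_refl _, hc₁.le⟩)
    have habsc : |c₁ - x₀| = x₀ - c₁ := by rw [abs_of_neg (by linarith)]; ring
    refine ⟨(part1 x hbx).1, ?_⟩
    rcases le_or_gt x c₁ with hxc | hxc
    · have h1 := (main1 x hbx).2
      have h2 : 1 / bbar x ≤ 1 / bbar c₁ :=
        one_div_le_one_div_of_le hbc₁ (hb_anti hxc)
      have h3 : 0 ≤ 2 * |c₁ - x₀| * S := by positivity
      linarith
    · have hsplit : (∫ y in Set.Iic x, g y)
          = (∫ y in Set.Iic c₁, g y) + ∫ y in Set.Ioc c₁ x, g y := by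
        rw [← setIntegral_union (Iic_disjoint_Ioc le_rfl) measurableSet_Ioc
          (part1 c₁ hbc₁).1 (hg_cont.integrableOn_Ioc), Iic_union_Ioc_eq_Iic hxc.le]
      have hA : (∫ y in Set.Iic c₁, g y) ≤ p x / bbar c₁ := by
        refine (part1 c₁ hbc₁).2.trans ?_
        gcongr
        exact hmono c₁ x hxc.le hx.le
      have hB : (∫ y in Set.Ioc c₁ x, g y) ≤ (x - c₁) * (2 * S * p x) := by
        have hptw : ∀ y ∈ Set.Ioc c₁ x, g y ≤ 2 * S * p x := by
          intro y hy
          have hy' : y ∈ Set.Icc c₁ x₀ := ⟨hy.1.le, hy.2.trans hx.le⟩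
          have h1 : 1 / abar y ≤ S := hS_le y hy'
          have h2 : p y ≤ p x := hmono y x hy.2 hx.le
          have h3 : g y = 2 * (1 / abar y) * p y := by
            show 2 / abar y * p y = _; ring
          rw [h3]
          have := (hp_pos y).le
          have h4 : 0 ≤ 1 / abar y := by have := ha_pos y; positivity
          nlinarith [hp_pos x]
        calc (∫ y in Set.Ioc c₁ x, g y) ≤ ∫ _y in Set.Ioc c₁ x, (2 * S * p x) := by
              apply setIntegral_mono_on (hg_cont.integrableOn_Ioc)
                (Iff.mpr integrableOn_const_iff (Or.inr measure_Ioc_lt_top)) measurableSet_Ioc hptw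
          _ = (x - c₁) * (2 * S * p x) := by
              rw [setIntegral_const, Real.volume_real_Ioc, max_eq_left (by linarith),
                smul_eq_mul]
      have hpx := hp_pos x
      have hpinv : (0:ℝ) ≤ (p x)⁻¹ := (inv_nonneg.mpr hpx.le)
      rw [hsplit, mul_add]
      have t1 : (p x)⁻¹ * (∫ y in Set.Iic c₁, g y) ≤ 1 / bbar c₁ := by
        refine (mul_le_mul_of_nonneg_left hA hpinv).trans_eq (cancel1 _ _ (hp_pos x).ne')
      have t2 : (p x)⁻¹ * (∫ y in Set.Ioc c₁ x, g y) ≤ 2 * |c₁ - x₀| * S := by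
        refine (mul_le_mul_of_nonneg_left hB hpinv).trans ?_
        have he : (p x)⁻¹ * ((x - c₁) * (2 * S * p x)) = (x - c₁) * (2 * S) := by
          field_simp
        rw [he, habsc]
        nlinarith
      linarith
  · -- (iii) right part
    intro c₂ hc₂ x hx
    have hbx := hbneg x hx
    have hbc₂ := hbneg c₂ hc₂
    have hpx₀ := hp_pos x₀
    have hq_eq : (fun y => 2 / abar y * (p y / p x₀)) = fun y => g y / p x₀ := by
      funext y; show _ = 2 / abar y * p y / p x₀; ring
    have hqint : IntegrableOn (fun y => 2 / abar y * (p y / p x₀)) (Set.Ici x) := by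
      rw [hq_eq]; exact (part2 x hbx).1.div_const _
    refine ⟨hqint, ?_⟩
    have hred : (p x₀ / p x) * (∫ y in Set.Ici x, 2 / abar y * (p y / p x₀))
        = (p x)⁻¹ * (∫ y in Set.Ici x, g y) := by
      rw [hq_eq, integral_div]
      field_simp
    rw [hred]
    set S := sSup ((fun y => 1 / abar y) '' Set.Icc x₀ c₂) with hS_def
    have hS_bdd : BddAbove ((fun y => 1 / abar y) '' Set.Icc x₀ c₂) :=
      (isCompact_Icc.image hinv_cont).bddAbove
    have hS_le : ∀ y ∈ Set.Icc x₀ c₂, 1 / abar y ≤ S := fun y hy =>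
      le_csSup hS_bdd ⟨y, hy, rfl⟩
    have hS0 : 0 ≤ S := le_trans (by have := ha_pos c₂; positivity)
      (hS_le c₂ ⟨hc₂.le, le_refl _⟩)
    have habsc : |c₂ - x₀| = c₂ - x₀ := abs_of_pos (by linarith)
    rcases le_or_gt c₂ x with hxc | hxc
    · have h1 := (main2 x hbx).2
      have h2 : 1 / |bbar x| ≤ 1 / |bbar c₂| := by
        apply one_div_le_one_div_of_le (abs_pos.mpr hbc₂.ne)
        rw [abs_of_neg hbc₂, abs_of_neg hbx]
        have := hb_anti hxc; linarith
      have h3 : 0 ≤ 2 * |c₂ - x₀| * S := by positivity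
      linarith
    · have hsplit : (∫ y in Set.Ici x, g y)
          = (∫ y in Set.Ico x c₂, g y) + ∫ y in Set.Ici c₂, g y := by
        rw [← setIntegral_union ((Iio_disjoint_Ici le_rfl).mono_left Ico_subset_Iio_self)
          measurableSet_Ici ((hg_cont.integrableOn_Icc.mono_set Ico_subset_Icc_self)) (part2 c₂ hbc₂).1,
          Ico_union_Ici_eq_Ici hxc.le]
      have hA : (∫ y in Set.Ici c₂, g y) ≤ p x / |bbar c₂| := by
        refine (part2 c₂ hbc₂).2.trans ?_
        gcongr
        exact hanti x c₂ hx.le hxc.le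
      have hB : (∫ y in Set.Ico x c₂, g y) ≤ (c₂ - x) * (2 * S * p x) := by
        have hptw : ∀ y ∈ Set.Ico x c₂, g y ≤ 2 * S * p x := by
          intro y hy
          have hy' : y ∈ Set.Icc x₀ c₂ := ⟨hx.le.trans hy.1, hy.2.le⟩
          have h1 : 1 / abar y ≤ S := hS_le y hy'
          have h2 : p y ≤ p x := hanti x y hx.le hy.1
          have h3 : g y = 2 * (1 / abar y) * p y := by
            show 2 / abar y * p y = _; ring
          rw [h3]
          have := (hp_pos y).le
          have h4 : 0 ≤ 1 / abar y := by have := ha_pos y; positivity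
          nlinarith [hp_pos x]
        calc (∫ y in Set.Ico x c₂, g y) ≤ ∫ _y in Set.Ico x c₂, (2 * S * p x) := by
              apply setIntegral_mono_on ((hg_cont.integrableOn_Icc.mono_set Ico_subset_Icc_self))
                (Iff.mpr integrableOn_const_iff (Or.inr measure_Ico_lt_top)) measurableSet_Ico hptw
          _ = (c₂ - x) * (2 * S * p x) := by
              rw [setIntegral_const, Real.volume_real_Ico, max_eq_left (by linarith),
                smul_eq_mul]
      have hpx := hp_pos x
      have hpinv : (0:ℝ) ≤ (p x)⁻¹ := (inv_nonneg.mpr hpx.le)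
      rw [hsplit, mul_add]
      have t1 : (p x)⁻¹ * (∫ y in Set.Ici c₂, g y) ≤ 1 / |bbar c₂| := by
        refine (mul_le_mul_of_nonneg_left hA hpinv).trans_eq (cancel1 _ _ (hp_pos x).ne')
      have t2 : (p x)⁻¹ * (∫ y in Set.Ico x c₂, g y) ≤ 2 * |c₂ - x₀| * S := by
        refine (mul_le_mul_of_nonneg_left hB hpinv).trans ?_
        have he : (p x)⁻¹ * ((c₂ - x) * (2 * S * p x)) = (c₂ - x) * (2 * S) := by
          field_simp
        rw [he, habsc]
        nlinarith
      linarith
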